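/- Let X be a real N × m matrix of full column rank m ≤ N, y ∈ ℝ^N, c ∈ ℝ^m nonzero, c0 ∈ ℝ. Let α̂ = (XᵀX)⁻¹Xᵀy and y0² = ‖y − Xα̂‖². If c0 + cᵀα̂ ≠ 0, then the function g(α) = ‖y − Xα‖²/(c0 + cᵀα)², defined on {α : c0 + cᵀα ≠ 0}, is uniquely minimized at α* = α̂ + (y0²/(c0 + cᵀα̂))·(XᵀX)⁻¹c. -/

import Mathlib

open Matrix


set_option maxHeartbeats 1000000 in
theorem aux (N m : ℕ) (X : Matrix (Fin N) (Fin m) ℝ)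
    (hinj : ∀ v : Fin m → ℝ, X.mulVec v = 0 → v = 0)
    (y : Fin N → ℝ) (c : Fin m → ℝ) (hc : c ≠ 0) (c0 : ℝ)
    (αhat : Fin m → ℝ) (hαhat : αhat = ((Xᵀ * X)⁻¹).mulVec (Xᵀ.mulVec y))
    (s : ℝ) (hs : s = ∑ i, (y i - X.mulVec αhat i) ^ 2)
    (αstar : Fin m → ℝ)
    (hstar : αstar = αhat + (s / (c0 + c ⬝ᵥ αhat)) • ((Xᵀ * X)⁻¹).mulVec c)
    (hd : c0 + c ⬝ᵥ αhat ≠ 0) :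
    c0 + c ⬝ᵥ αstar ≠ 0 ∧
    ∀ α : Fin m → ℝ, c0 + c ⬝ᵥ α ≠ 0 →
      (∑ i, (y i - X.mulVec αstar i) ^ 2) / (c0 + c ⬝ᵥ αstar) ^ 2 ≤
        (∑ i, (y i - X.mulVec α i) ^ 2) / (c0 + c ⬝ᵥ α) ^ 2 ∧
      ((∑ i, (y i - X.mulVec α i) ^ 2) / (c0 + c ⬝ᵥ α) ^ 2 =
        (∑ i, (y i - X.mulVec αstar i) ^ 2) / (c0 + c ⬝ᵥ αstar) ^ 2 → α = αstar) := by
  obtain ⟨d, hd_def⟩ : ∃ d : ℝ, d = c0 + c ⬝ᵥ αhat := ⟨_, rfl⟩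
  rw [← hd_def] at hd hstar
  -- bilinear form identity
  have hbil : ∀ v w : Fin m → ℝ, v ⬝ᵥ (Xᵀ * X).mulVec w = X.mulVec v ⬝ᵥ X.mulVec w := by
    intro v w
    rw [← mulVec_mulVec, dotProduct_mulVec, vecMul_transpose]
  -- Xᵀ * X invertible
  have hdet : IsUnit (Xᵀ * X).det := by
    rw [isUnit_iff_ne_zero]
    intro h0
    obtain ⟨v, hv, hv0⟩ := (Matrix.exists_mulVec_eq_zero_iff).mpr h0
    apply hv
    apply hinj
    have h1 := hbil v v
    rw [hv0, dotProduct_zero] at h1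
    exact dotProduct_self_eq_zero.mp h1.symm
  have hAinv : Xᵀ * X * (Xᵀ * X)⁻¹ = 1 := mul_nonsing_inv _ hdet
  have hmulinv : ∀ w : Fin m → ℝ, (Xᵀ * X).mulVec (((Xᵀ * X)⁻¹).mulVec w) = w := by
    intro w
    rw [mulVec_mulVec, hAinv, one_mulVec]
  obtain ⟨u, hu_def⟩ : ∃ u : Fin m → ℝ, u = ((Xᵀ * X)⁻¹).mulVec c := ⟨_, rfl⟩
  rw [← hu_def] at hstar
  have hu : (Xᵀ * X).mulVec u = c := by rw [hu_def]; exact hmulinv c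
  obtain ⟨e, he⟩ : ∃ e : Fin N → ℝ, e = y - X.mulVec αhat := ⟨_, rfl⟩
  have hsum : ∀ v : Fin N → ℝ, ∑ i, (v i) ^ 2 = v ⬝ᵥ v := by
    intro v; simp [dotProduct, sq]
  have hse : s = e ⬝ᵥ e := by
    rw [hs, ← hsum e]
    exact Finset.sum_congr rfl fun i _ => by rw [he]; simp
  -- orthogonality
  have hXe : Xᵀ.mulVec e = 0 := by
    rw [he, mulVec_sub, mulVec_mulVec]
    have : (Xᵀ * X).mulVec αhat = Xᵀ.mulVec y := by rw [hαhat]; exact hmulinv _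
    rw [this, sub_self]
  have horth : ∀ w : Fin m → ℝ, e ⬝ᵥ X.mulVec w = 0 := by
    intro w
    rw [dotProduct_mulVec, ← mulVec_transpose, hXe, zero_dotProduct]
  -- positivity
  have hP : ∀ v : Fin N → ℝ, 0 ≤ v ⬝ᵥ v := by
    intro v
    rw [← hsum]
    exact Finset.sum_nonneg fun i _ => sq_nonneg _
  have hs0 : 0 ≤ s := by rw [hse]; exact hP e
  -- decomposition
  have hdecomp : ∀ α : Fin m → ℝ, (∑ i, (y i - X.mulVec α i) ^ 2) =
      s + X.mulVec (α - αhat) ⬝ᵥ X.mulVec (α - αhat) := by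
    intro α
    have h1 : ∀ i, y i - X.mulVec α i = (e - X.mulVec (α - αhat)) i := by
      intro i
      rw [he]
      simp [mulVec_sub, Pi.sub_apply]
    calc (∑ i, (y i - X.mulVec α i) ^ 2)
        = ∑ i, ((e - X.mulVec (α - αhat)) i) ^ 2 := Finset.sum_congr rfl fun i _ => by rw [h1]
      _ = (e - X.mulVec (α - αhat)) ⬝ᵥ (e - X.mulVec (α - αhat)) := hsum _
      _ = s + X.mulVec (α - αhat) ⬝ᵥ X.mulVec (α - αhat) := by
          rw [dotProduct_sub, sub_dotProduct, sub_dotProduct, horth,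
            dotProduct_comm (X.mulVec (α - αhat)) e, horth, ← hse]
          ring
  -- q
  obtain ⟨q, hq_def⟩ : ∃ q : ℝ, q = X.mulVec u ⬝ᵥ X.mulVec u := ⟨_, rfl⟩
  have hcq : c ⬝ᵥ u = q := by
    rw [← hu, dotProduct_comm, hbil, hq_def]
  have hXu : X.mulVec u ≠ 0 := by
    intro h
    apply hc
    rw [← hu, hinj u h, mulVec_zero]
  have hq : 0 < q := by
    rw [hq_def]
    exact lt_of_le_of_ne (hP _) fun h => hXu (dotProduct_self_eq_zero.mp h.symm)
  have hcb : ∀ β : Fin m → ℝ, c ⬝ᵥ β = X.mulVec u ⬝ᵥ X.mulVec β := by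
    intro β
    rw [← hu, dotProduct_comm, hbil, dotProduct_comm]
  -- value at αstar
  have hstar_sub : αstar - αhat = (s / d) • u := by rw [hstar]; exact add_sub_cancel_left _ _
  have hcstar : c0 + c ⬝ᵥ αstar = d + (s / d) * q := by
    rw [hstar, dotProduct_add, dotProduct_smul, smul_eq_mul, hcq, hd_def]
    ring
  have hpos : 0 < d ^ 2 + s * q := by
    have h1 : 0 < d ^ 2 := by positivity
    nlinarith [mul_nonneg hs0 hq.le]
  have hds : d + (s / d) * q = (d ^ 2 + s * q) / d := by field_simp
  have hne : c0 + c ⬝ᵥ αstar ≠ 0 := by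
    rw [hcstar, hds]
    exact div_ne_zero hpos.ne' hd
  have hL : (s + (s / d) ^ 2 * q) / ((d ^ 2 + s * q) / d) ^ 2 = s / (d ^ 2 + s * q) := by
    rw [div_eq_div_iff (by positivity) hpos.ne']
    field_simp
  have hgstar : (∑ i, (y i - X.mulVec αstar i) ^ 2) = s + (s / d) ^ 2 * q := by
    rw [hdecomp, hstar_sub, mulVec_smul, smul_dotProduct, dotProduct_smul, ← hq_def]
    simp only [smul_eq_mul]; ring
  refine ⟨hne, fun α hα => ?_⟩
  obtain ⟨β, hβ⟩ : ∃ β : Fin m → ℝ, β = α - αhat := ⟨_, rfl⟩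
  obtain ⟨t, ht_def⟩ : ∃ t : ℝ, t = c ⬝ᵥ β := ⟨_, rfl⟩
  obtain ⟨Q, hQ_def⟩ : ∃ Q : ℝ, Q = X.mulVec β ⬝ᵥ X.mulVec β := ⟨_, rfl⟩
  have hQ0 : 0 ≤ Q := by rw [hQ_def]; exact hP _
  have hdt : c0 + c ⬝ᵥ α = d + t := by
    rw [ht_def, hβ, dotProduct_sub, hd_def]; ring
  have hdtne : d + t ≠ 0 := by rw [← hdt]; exact hα
  have h2pos : 0 < (d + t) ^ 2 := lt_of_le_of_ne (sq_nonneg _) (Ne.symm (pow_ne_zero 2 hdtne))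
  have htXB : X.mulVec u ⬝ᵥ X.mulVec β = t := by rw [ht_def, hcb]
  have hexp : X.mulVec (q • β - t • u) ⬝ᵥ X.mulVec (q • β - t • u) = q * (q * Q - t ^ 2) := by
    simp only [mulVec_sub, mulVec_smul, dotProduct_sub, sub_dotProduct, dotProduct_smul,
      smul_dotProduct, smul_eq_mul, dotProduct_comm (X.mulVec β) (X.mulVec u), htXB,
      ← hq_def, ← hQ_def]
    ring
  have hCS : t ^ 2 ≤ q * Q := by
    have h0 := hP (X.mulVec (q • β - t • u))
    rw [hexp] at h0
    nlinarith [hq]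
  have hgα : (∑ i, (y i - X.mulVec α i) ^ 2) = s + Q := by rw [hdecomp, ← hβ, ← hQ_def]
  constructor
  · rw [hgα, hgstar, hdt, hcstar, hds, hL, div_le_div_iff₀ hpos h2pos]
    nlinarith [sq_nonneg (s * q - d * t), mul_nonneg (mul_nonneg hs0 hq.le) (sub_nonneg.mpr hCS),
      mul_nonneg (sq_nonneg d) (sub_nonneg.mpr hCS), sq_nonneg d]
  · intro heq
    rw [hgα, hgstar, hdt, hcstar, hds, hL, div_eq_div_iff h2pos.ne' hpos.ne'] at heq
    have hkey : (s * q - d * t) ^ 2 + (d ^ 2 + s * q) * (q * Q - t ^ 2) = 0 := by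
      linear_combination q * heq
    have hB := mul_nonneg hpos.le (sub_nonneg.mpr hCS)
    have hA2 := sq_nonneg (s * q - d * t)
    have h4 : (s * q - d * t) ^ 2 = 0 := by linarith
    have h5 : q * Q - t ^ 2 = 0 := by
      have h6 : (d ^ 2 + s * q) * (q * Q - t ^ 2) = 0 := by linarith
      rcases mul_eq_zero.mp h6 with h | h
      · exact absurd h hpos.ne'
      · exact h
    have h6 : s * q = d * t := by
      have := sq_eq_zero_iff.mp h4
      linarith
    have h7 : X.mulVec (q • β - t • u) ⬝ᵥ X.mulVec (q • β - t • u) = 0 := by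
      rw [hexp, h5, mul_zero]
    have h8 : q • β - t • u = 0 := hinj _ (dotProduct_self_eq_zero.mp h7)
    have h9 : q • β = t • u := sub_eq_zero.mp h8
    have h10 : q * (s / d) = t := by field_simp; linarith
    have h11 : q • ((s / d) • u) = q • β := by
      rw [smul_smul, h10, h9]
    have hβeq : β = (s / d) • u := (smul_right_injective (Fin m → ℝ) hq.ne' h11).symm
    rw [hstar, ← hβeq, hβ]
    abel

theorem stmt_4 (N m : ℕ) (hm : m ≤ N) (X : Matrix (Fin N) (Fin m) ℝ)
    (hX : X.rank = m) (y : Fin N → ℝ) (c : Fin m → ℝ) (hc : c ≠ 0) (c0 : ℝ) :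
    let αhat : Fin m → ℝ := ((Xᵀ * X)⁻¹).mulVec (Xᵀ.mulVec y)
    let y0sq : ℝ := ∑ i, (y i - X.mulVec αhat i) ^ 2
    let g : (Fin m → ℝ) → ℝ :=
      fun α => (∑ i, (y i - X.mulVec α i) ^ 2) / (c0 + c ⬝ᵥ α) ^ 2
    let αstar : Fin m → ℝ :=
      αhat + (y0sq / (c0 + c ⬝ᵥ αhat)) • ((Xᵀ * X)⁻¹).mulVec c
    c0 + c ⬝ᵥ αhat ≠ 0 →
      c0 + c ⬝ᵥ αstar ≠ 0 ∧
      ∀ α : Fin m → ℝ, c0 + c ⬝ᵥ α ≠ 0 →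
        g αstar ≤ g α ∧ (g α = g αstar → α = αstar) := by
  intro αhat y0sq g αstar hd
  have hinj : ∀ v : Fin m → ℝ, X.mulVec v = 0 → v = 0 := by
    have h2 := LinearMap.finrank_range_add_finrank_ker X.mulVecLin
    rw [show Module.finrank ℝ ↥(LinearMap.range X.mulVecLin) = X.rank from rfl, hX,
      Module.finrank_fin_fun] at h2
    have hker : LinearMap.ker X.mulVecLin = ⊥ := Submodule.finrank_eq_zero.mp (by omega)
    intro v hv
    exact LinearMap.ker_eq_bot.mp hker (by simpa using hv)
  exact aux N m X hinj y c hc c0 αhat rfl y0sq rfl αstar rfl hd
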